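/- For 0 < α ≤ 1 and 0 < y ≤ 1, one has (1 + αy/(α+1)) · (1 - y/(α+1))^α < 1. -/

import Mathlib

theorem stmt0 (α y : ℝ) (hα0 : 0 < α) (hα1 : α ≤ 1) (hy0 : 0 < y) (hy1 : y ≤ 1) :
    (1 + α * y / (α + 1)) * (1 - y / (α + 1)) ^ α < 1 := by
  set t : ℝ := y / (α + 1) with ht
  have hα1' : (0:ℝ) < α + 1 := by linarith
  have ht0 : 0 < t := div_pos hy0 hα1'
  have ht1 : t < 1 := by
    rw [ht, div_lt_one hα1']; linarith
  have hb : (1 - t) ^ α ≤ 1 + α * (-t) := by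
    have := rpow_one_add_le_one_add_mul_self (s := -t) (by linarith) hα0.le hα1
    simpa [← sub_eq_add_neg] using this
  have h1 : 0 < 1 + α * y / (α + 1) := by positivity
  calc (1 + α * y / (α + 1)) * (1 - t) ^ α
      ≤ (1 + α * t) * (1 - α * t) := by
        have : 1 + α * y / (α + 1) = 1 + α * t := by rw [ht]; ring
        rw [this]; nlinarith [hb]
    _ = 1 - (α * t) ^ 2 := by ring
    _ < 1 := by nlinarith [mul_pos hα0 ht0]
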